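/- Let 𝔽 be ℝ or ℂ and let Λ be an index set. Let T : ℓ₁(Λ) → ℓ₁(Λ) be a bounded linear map, and let t_{αβ} denote the α-coordinate of T(e_β), where e_β is the β-th coordinate vector. Then T preserves TEA pairs (i.e., (Tx, Ty) is a TEA pair whenever (x, y) is a TEA pair) if and only if for each α ∈ Λ there is at most one β ∈ Λ such that t_{αβ} ≠ 0. -/

import Mathlib

open scoped ENNReal

/-- Two vectors in a normed space form a *triangle equality attaining* (TEA) pair
if `‖x + y‖ = ‖x‖ + ‖y‖`. -/
def TEAPair {E : Type*} [NormedAddCommGroup E] (x y : E) : Prop :=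
  ‖x + y‖ = ‖x‖ + ‖y‖

section Aux

variable {𝕜 : Type*} [RCLike 𝕜] {Λ : Type*} [DecidableEq Λ]

private lemma norm_l1 (f : lp (fun _ : Λ => 𝕜) 1) : ‖f‖ = ∑' i, ‖f i‖ := by
  rw [lp.norm_eq_tsum_rpow (by simp) f]
  simp

private lemma summable_l1 (f : lp (fun _ : Λ => 𝕜) 1) : Summable fun i => ‖f i‖ := by
  have := (lp.memℓp f).summable (p := 1) (by simp)
  simpa using this

private lemma tea_coord {x y : lp (fun _ : Λ => 𝕜) 1} (h : TEAPair x y) (i : Λ) :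
    ‖x i + y i‖ = ‖x i‖ + ‖y i‖ := by
  by_contra hne
  have hlt : ‖x i + y i‖ < ‖x i‖ + ‖y i‖ := lt_of_le_of_ne (norm_add_le _ _) hne
  have hle : ∀ j, ‖x j + y j‖ ≤ ‖x j‖ + ‖y j‖ := fun j => norm_add_le _ _
  have hf : Summable fun j => ‖x j + y j‖ := by
    have := summable_l1 (x + y)
    simpa [lp.coeFn_add] using this
  have hg : Summable fun j => ‖x j‖ + ‖y j‖ := (summable_l1 x).add (summable_l1 y)
  have hstrict := Summable.tsum_lt_tsum hle hlt hf hg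
  have heq : (∑' j, ‖x j + y j‖) = ∑' j, (‖x j‖ + ‖y j‖) := by
    have h1 : (∑' j, ‖x j + y j‖) = ‖x + y‖ := by
      rw [norm_l1]
      exact tsum_congr fun j => by simp [lp.coeFn_add]
    rw [h1, h, norm_l1, norm_l1, Summable.tsum_add (summable_l1 x) (summable_l1 y)]
  exact absurd heq (ne_of_lt hstrict)

private lemma tea_of_coord {x y : lp (fun _ : Λ => 𝕜) 1}
    (h : ∀ i, ‖x i + y i‖ = ‖x i‖ + ‖y i‖) : TEAPair x y := by
  unfold TEAPair
  rw [norm_l1, norm_l1, norm_l1, ← Summable.tsum_add (summable_l1 x) (summable_l1 y)]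
  exact tsum_congr fun i => by simp only [lp.coeFn_add, Pi.add_apply]; exact h i

/-- The coordinate evaluation as a continuous linear map on `ℓ¹`. -/
private noncomputable def evalCLM (i : Λ) : lp (fun _ : Λ => 𝕜) 1 →L[𝕜] 𝕜 :=
  LinearMap.mkContinuous
    { toFun := fun f => f i
      map_add' := fun f g => by simp [lp.coeFn_add]
      map_smul' := fun c f => by simp [lp.coeFn_smul] }
    1 (fun f => by show ‖(f : Λ → 𝕜) i‖ ≤ 1 * ‖f‖; simpa using lp.norm_apply_le_norm one_ne_zero f i)

private lemma hasSum_coord (T : lp (fun _ : Λ => 𝕜) 1 →L[𝕜] lp (fun _ : Λ => 𝕜) 1)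
    (x : lp (fun _ : Λ => 𝕜) 1) (α : Λ) :
    HasSum (fun β => x β * T (lp.single 1 β (1 : 𝕜)) α) (T x α) := by
  have h0 : HasSum (fun β : Λ => lp.single 1 β (x β)) x :=
    lp.hasSum_single (by simp) x
  have h1 : HasSum (fun β : Λ => (evalCLM α : lp (fun _ : Λ => 𝕜) 1 →L[𝕜] 𝕜)
      (T (lp.single 1 β (x β)))) ((evalCLM α) (T x)) :=
    ((evalCLM α).comp T).hasSum h0
  have key : ∀ β, (evalCLM (𝕜 := 𝕜) α) (T (lp.single 1 β (x β)))
      = x β * T (lp.single 1 β (1 : 𝕜)) α := by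
    intro β
    have hs : lp.single (E := fun _ : Λ => 𝕜) 1 β (x β) = x β • lp.single (E := fun _ : Λ => 𝕜) 1 β (1 : 𝕜) := by
      have h := lp.single_smul (E := fun _ : Λ => 𝕜) 1 β (x β) (1 : 𝕜)
      rw [smul_eq_mul, mul_one] at h
      exact h
    rw [hs, map_smul, map_smul]
    exact rfl
  have : (evalCLM (𝕜 := 𝕜) α) (T x) = T x α := rfl
  rw [this] at h1
  rwa [funext key] at h1

end Aux

/-- A bounded linear map `T` of `ℓ₁(Λ)` (`𝔽 = ℝ` or `ℂ`), with matrix entries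
`t_{αβ} = (T e_β)_α`, preserves TEA pairs if and only if for each `α` there is at most
one `β` with `t_{αβ} ≠ 0`. -/
theorem l1_inf_TEA_preserver_iff {𝕜 : Type*} [RCLike 𝕜] {Λ : Type*} [DecidableEq Λ]
    (T : lp (fun _ : Λ => 𝕜) 1 →L[𝕜] lp (fun _ : Λ => 𝕜) 1) :
    (∀ x y : lp (fun _ : Λ => 𝕜) 1, TEAPair x y → TEAPair (T x) (T y)) ↔
      ∀ α β β' : Λ,
        T (lp.single 1 β (1 : 𝕜)) α ≠ 0 → T (lp.single 1 β' (1 : 𝕜)) α ≠ 0 → β = β' := by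
  constructor
  · -- preserver → column condition
    intro hT α β β' hβ hβ'
    by_contra hne
    have ht' := hβ'
    set c : 𝕜 := -(T (lp.single 1 β (1 : 𝕜)) α) / (T (lp.single 1 β' (1 : 𝕜)) α) with hc
    have htea : TEAPair (lp.single (E := fun _ : Λ => 𝕜) 1 β (1 : 𝕜)) (lp.single (E := fun _ : Λ => 𝕜) 1 β' c) := by
      apply tea_of_coord
      intro i
      by_cases hiβ : i = β
      · have h0 : lp.single (E := fun _ : Λ => 𝕜) 1 β' c i = 0 := by
          apply lp.single_apply_ne
          rw [hiβ]; exact fun h => hne h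
        simp [h0, Pi.single_apply, hiβ, hne]
      · have h0 : lp.single (E := fun _ : Λ => 𝕜) 1 β (1 : 𝕜) i = 0 := lp.single_apply_ne (E := fun _ : Λ => 𝕜) 1 β (1 : 𝕜) hiβ
        simp [h0, Pi.single_apply, hiβ, hne]
    have hco := tea_coord (hT _ _ htea) α
    have hs : lp.single (E := fun _ : Λ => 𝕜) 1 β' c = c • lp.single (E := fun _ : Λ => 𝕜) 1 β' (1 : 𝕜) := by
      have h := lp.single_smul (E := fun _ : Λ => 𝕜) 1 β' c (1 : 𝕜)
      rw [smul_eq_mul, mul_one] at h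
      exact h
    have h2 : T (lp.single 1 β' c) α = c * T (lp.single 1 β' (1 : 𝕜)) α := by
      rw [hs, map_smul, lp.coeFn_smul]
      simp
    rw [h2] at hco
    have hzero : T (lp.single 1 β (1 : 𝕜)) α + c * T (lp.single 1 β' (1 : 𝕜)) α = 0 := by
      rw [hc]
      field_simp
      ring
    rw [hzero, norm_zero] at hco
    have hn1 : (0:ℝ) ≤ ‖c * T (lp.single 1 β' (1 : 𝕜)) α‖ := norm_nonneg _
    have hn2 : ‖T (lp.single 1 β (1 : 𝕜)) α‖ = 0 := by linarith [norm_nonneg (T (lp.single 1 β (1 : 𝕜)) α)]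
    exact hβ (norm_eq_zero.mp hn2)
  · -- column condition → preserver
    intro H x y hxy
    apply tea_of_coord
    intro α
    have hx := hasSum_coord T x α
    have hy := hasSum_coord T y α
    by_cases hex : ∃ β, T (lp.single 1 β (1 : 𝕜)) α ≠ 0
    · obtain ⟨β₀, hβ₀⟩ := hex
      have hzero : ∀ β, β ≠ β₀ → x β * T (lp.single 1 β (1 : 𝕜)) α = 0 := by
        intro β hβ
        rcases eq_or_ne (T (lp.single 1 β (1 : 𝕜)) α) 0 with h | h
        · simp [h]
        · exact absurd (H α β β₀ h hβ₀) hβ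
      have hzero' : ∀ β, β ≠ β₀ → y β * T (lp.single 1 β (1 : 𝕜)) α = 0 := by
        intro β hβ
        rcases eq_or_ne (T (lp.single 1 β (1 : 𝕜)) α) 0 with h | h
        · simp [h]
        · exact absurd (H α β β₀ h hβ₀) hβ
      have hxval : T x α = x β₀ * T (lp.single 1 β₀ (1 : 𝕜)) α :=
        hx.unique (hasSum_single β₀ hzero)
      have hyval : T y α = y β₀ * T (lp.single 1 β₀ (1 : 𝕜)) α :=
        hy.unique (hasSum_single β₀ hzero')
      rw [hxval, hyval, ← add_mul, norm_mul, norm_mul, norm_mul, ← add_mul]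
      rw [tea_coord hxy β₀]
    · push_neg at hex
      have hxval : T x α = 0 := hx.unique (by simpa [hex] using hasSum_zero)
      have hyval : T y α = 0 := hy.unique (by simpa [hex] using hasSum_zero)
      simp [hxval, hyval]
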